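/- Comparison with the adjacency list: for every rooted plane tree T with n(T) = n ≥ 4 nodes, the TreeExplorer representation of the corresponding labeled tree, which uses |TE(T)| + n·⌈log₂ n⌉ bits (the structure code followed by the n node labels of ⌈log₂ n⌉ bits each), is strictly shorter than the adjacency-list representation, which uses 2n·⌈log₂ n⌉ bits. -/

import Mathlib

/-- A rooted plane tree: a root node together with a finite ordered list of
subtrees, the subtrees rooted at the children of the root. -/
inductive PTree : Type
  | node : List PTree → PTree

namespace PTree

/-- The subtrees rooted at the children of the root. -/
def children : PTree → List PTree
  | node ts => ts

mutual
/-- Number of nodes of a rooted plane tree. -/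
def numNodes : PTree → ℕ
  | node ts => 1 + numNodesList ts
def numNodesList : List PTree → ℕ
  | [] => 0
  | t :: ts => numNodes t + numNodesList ts
end

mutual
/-- Number of leaves (nodes with no children); a single-node tree has one leaf. -/
def numLeaves : PTree → ℕ
  | node [] => 1
  | node (t :: ts) => numLeaves t + numLeavesList ts
def numLeavesList : List PTree → ℕ
  | [] => 0
  | t :: ts => numLeaves t + numLeavesList ts
end

/-- Symbols of the ternary pit-climbing code: ↓, ↑, ⇑. -/
inductive PCSym : Type
  | down   -- ↓ : fall to the leftmost unexplored leaf
  | up     -- ↑ : climb to a never-before-visited node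
  | upSeen -- ⇑ : climb to an already-visited node
deriving DecidableEq

mutual
/-- Ternary pit-climbing code TPC: empty for a single node; `TPC t ++ [↑]` for a
single child subtree `t`; `TPC t₁ ++ [↑,↓] ++ TPC t₂ ++ [⇑,↓] ++ ⋯ ++ [⇑,↓] ++ TPC tₖ ++ [⇑]`
for children subtrees `t₁, …, tₖ`, `k ≥ 2`. -/
def TPC : PTree → List PCSym
  | node [] => []
  | node [t] => TPC t ++ [.up]
  | node (t₁ :: t₂ :: ts) => TPC t₁ ++ [.up, .down] ++ TPCRest (t₂ :: ts)
/-- TPC contribution of the second-onwards children subtrees. -/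
def TPCRest : List PTree → List PCSym
  | [] => []
  | [t] => TPC t ++ [.upSeen]
  | t :: ts => TPC t ++ [.upSeen, .down] ++ TPCRest ts
end

/-- Binary encoding of the pit-climbing symbols: ↓ ↦ 0, ⇑ ↦ 00, ↑ ↦ 1. -/
def pcBits : PCSym → List Bool
  | .down => [false]
  | .upSeen => [false, false]
  | .up => [true]

/-- Binary pit-climbing code PC. -/
def PC (T : PTree) : List Bool := (TPC T).flatMap pcBits

lemma numNodesList_append (a b : List PTree) :
    numNodesList (a ++ b) = numNodesList a + numNodesList b := by
  induction a with
  | nil => simp [numNodesList]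
  | cons t ts ih => simp [numNodesList, ih]; ring

lemma numNodesList_children_flatten (l : List PTree) :
    numNodesList ((l.map children).flatten) + l.length = numNodesList l := by
  induction l with
  | nil => simp [numNodesList]
  | cons t ts ih =>
      cases t with
      | node cs =>
        simp only [List.map_cons, List.flatten_cons, numNodesList_append,
          List.length_cons, numNodesList, children, numNodes]
        omega

/-- Breadth-first list of the sibling groups of a tree, starting from the list
`gs` of sibling groups at the current level: the groups of the current level
followed by the groups of children on the levels below, level by level and
left to right within each level. -/
def bfsGroups (gs : List (List PTree)) : List (List PTree) :=
  if h : gs.flatten.isEmpty then []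
  else gs ++ bfsGroups (gs.flatten.map children)
termination_by numNodesList gs.flatten
decreasing_by
  have h1 := numNodesList_children_flatten gs.flatten
  have h2 : gs.flatten.length ≠ 0 := by
    intro hh
    rw [List.length_eq_zero_iff] at hh
    exact h (List.isEmpty_iff.mpr hh)
  omega

/-- Symbols of the ternary tunnel-digging code: ←, →, ⇒. -/
inductive TDSym : Type
  | leaf   -- ← : a leaf node
  | inner  -- → : a node with at least one child
  | tunnel -- ⇒ : transition between consecutive non-sibling nodes
deriving DecidableEq

/-- The symbols written for one sibling group: ← for each leaf, → for each
node with at least one child. -/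
def groupSyms (g : List PTree) : List TDSym :=
  g.map (fun t => if t.children.isEmpty then .leaf else .inner)

/-- Ternary tunnel-digging code TTD: the non-root nodes in breadth-first order
(by increasing depth, left to right within each depth), ← for each leaf and →
for each internal node, with ⇒ inserted between every two consecutive
non-sibling nodes. -/
def TTD (T : PTree) : List TDSym :=
  List.intercalate [TDSym.tunnel]
    (((bfsGroups [T.children]).filter (fun g => ¬ g.isEmpty)).map groupSyms)

/-- Binary encoding of the tunnel-digging symbols: ⇒ ↦ 0, → ↦ 00, ← ↦ 1. -/
def tdBits : TDSym → List Bool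
  | .tunnel => [false]
  | .inner => [false, false]
  | .leaf => [true]

/-- Binary tunnel-digging code TD. -/
def TD (T : PTree) : List Bool := (TTD T).flatMap tdBits

/-- TreeExplorer code TE: `0·PC(T)` if `l(T) < n(T)/2`, and `1·TD(T)` otherwise. -/
def TE (T : PTree) : List Bool :=
  if 2 * numLeaves T < numNodes T then false :: PC T else true :: TD T

end PTree

namespace PTree

lemma PC_length (T : PTree) :
    (PC T).length + 3 = numNodes T + 2 * numLeaves T := by
  have main : ∀ t : PTree,
      ((TPC t).flatMap pcBits).length + 3 = numNodes t + 2 * numLeaves t := by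
    apply TPC.induct
      (motive_2 := fun ts => ts ≠ [] →
        ((TPCRest ts).flatMap pcBits).length + 1 = numNodesList ts + 2 * numLeavesList ts)
    · simp [TPC, numNodes, numNodesList, numLeaves]
    · intro t ih
      simp [TPC, numNodes, numNodesList, numLeaves, numLeavesList, pcBits] at *
      omega
    · intro t₁ t₂ ts ih1 ih2
      have h2 := ih2 (by simp)
      simp [TPC, numNodes, numNodesList, numLeaves, numLeavesList, pcBits] at *
      omega
    · intro h; simp at h
    · intro t ih _
      simp [TPCRest, numNodesList, numLeavesList, pcBits] at *
      omega
    · intro t ts hne ih1 ih2 _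
      have hne' : ts ≠ [] := fun h => hne h
      have h2 := ih2 hne'
      obtain ⟨t', ts', rfl⟩ := List.exists_cons_of_ne_nil hne'
      simp [TPCRest, numNodesList, numLeavesList, pcBits] at *
      omega
  exact main T

end PTree

namespace PTree

/-- bit length of one group -/
def gbl (g : List PTree) : ℕ := ((groupSyms g).flatMap tdBits).length

/-- sum of group bit lengths -/
def sb (L : List (List PTree)) : ℕ := (L.map gbl).sum

lemma sb_append (A B : List (List PTree)) : sb (A ++ B) = sb A + sb B := by
  simp [sb]

lemma gbl_cons (t : PTree) (g : List PTree) :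
    gbl (t :: g) = (if t.children.isEmpty then 1 else 2) + gbl g := by
  simp [gbl, groupSyms]
  split <;> simp [tdBits]

-- (3) one level of groups
lemma sb_level (gs : List (List PTree)) :
    sb gs + gs.flatten.countP (fun t => t.children.isEmpty) = 2 * gs.flatten.length := by
  induction gs with
  | nil => simp [sb]
  | cons g gs ih =>
    simp only [List.flatten_cons, List.countP_append, List.length_append]
    have hg : sb [g] + g.countP (fun t => t.children.isEmpty) = 2 * g.length := by
      induction g with
      | nil => simp [sb, gbl, groupSyms]
      | cons t g ihg =>
        simp only [sb, List.map_cons, List.sum_cons, List.map_nil, List.sum_nil, gbl_cons,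
          List.countP_cons, List.length_cons] at *
        split <;> simp_all <;> omega
    have : sb (g :: gs) = sb [g] + sb gs := by simp [sb]
    omega

lemma numLeavesList_append (a b : List PTree) :
    numLeavesList (a ++ b) = numLeavesList a + numLeavesList b := by
  induction a with
  | nil => simp [numLeavesList]
  | cons t ts ih => simp [numLeavesList, ih]; ring

lemma numLeaves_node (cs : List PTree) (h : cs ≠ []) :
    numLeaves (node cs) = numLeavesList cs := by
  obtain ⟨c, cs, rfl⟩ := List.exists_cons_of_ne_nil h
  simp [numLeaves, numLeavesList]

-- (1) leaves relation across one level
lemma leaves_level (l : List PTree) :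
    numLeavesList l =
      l.countP (fun t => t.children.isEmpty) + numLeavesList (l.map children).flatten := by
  induction l with
  | nil => simp [numLeavesList]
  | cons t ts ih =>
    cases t with
    | node cs =>
      have h2 : ((node cs :: ts).map children).flatten
          = cs ++ (ts.map children).flatten := by simp [children]
      cases cs with
      | nil =>
        have hC : (node ([] : List PTree) :: ts).countP (fun t => t.children.isEmpty)
            = ts.countP (fun t => t.children.isEmpty) + 1 := by
          rw [List.countP_cons]; simp [children]
        have hL : numLeavesList (node ([] : List PTree) :: ts)
            = 1 + numLeavesList ts := rfl
        rw [hL, hC, h2]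
        simp only [List.nil_append]
        omega
      | cons c cs =>
        have hC : (node (c :: cs) :: ts).countP (fun t => t.children.isEmpty)
            = ts.countP (fun t => t.children.isEmpty) := by
          rw [List.countP_cons]; simp [children]
        have hL : numLeavesList (node (c :: cs) :: ts)
            = numLeavesList (c :: cs) + numLeavesList ts := by
          show numLeaves (node (c :: cs)) + numLeavesList ts = _
          rw [numLeaves_node _ (by simp)]
        rw [hL, hC, h2, numLeavesList_append]
        omega

-- (2) nonempty children groups vs childless nodes
lemma countP_level (l : List PTree) :
    (l.map children).countP (fun g => ¬ g.isEmpty) + l.countP (fun t => t.children.isEmpty)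
      = l.length := by
  induction l with
  | nil => simp
  | cons t ts ih =>
    cases t with
    | node cs =>
      rw [List.map_cons, List.countP_cons, List.countP_cons, List.length_cons]
      cases cs <;> [skip; skip] <;> (simp [children, -List.countP_map] at ih ⊢) <;> omega

end PTree

namespace PTree

lemma countP_flatten_nil (L : List (List PTree)) (h : L.flatten = []) :
    L.countP (fun g => ¬ g.isEmpty) = 0 := by
  rw [List.countP_eq_zero]
  intro g hg
  have : g = [] := by
    have := List.flatten_eq_nil_iff.mp h
    exact this g hg
  simp [this]

-- main lemma A : bit-sum over all bfs groups
lemma sb_bfs (gs : List (List PTree)) :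
    sb (bfsGroups gs) + numLeavesList gs.flatten = 2 * numNodesList gs.flatten := by
  induction gs using bfsGroups.induct with
  | case1 gs h =>
    have : gs.flatten = [] := List.isEmpty_iff.mp h
    rw [bfsGroups, dif_pos h, this]
    simp [sb, numLeavesList, numNodesList]
  | case2 gs h ih =>
    rw [bfsGroups, dif_neg h, sb_append]
    have hflat : (List.map children gs.flatten).flatten = (gs.flatten.map children).flatten := rfl
    have hlev := sb_level gs
    have hle := leaves_level gs.flatten
    have hnn := numNodesList_children_flatten gs.flatten
    omega

-- main lemma B : number of nonempty groups
lemma countP_bfs (gs : List (List PTree)) :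
    (bfsGroups gs).countP (fun g => ¬ g.isEmpty) + numLeavesList gs.flatten
      = gs.countP (fun g => ¬ g.isEmpty) + numNodesList gs.flatten := by
  induction gs using bfsGroups.induct with
  | case1 gs h =>
    have h0 : gs.flatten = [] := List.isEmpty_iff.mp h
    rw [bfsGroups, dif_pos h, h0]
    have := countP_flatten_nil gs h0
    simp only [List.countP_nil, numLeavesList, numNodesList]
    omega
  | case2 gs h ih =>
    rw [bfsGroups, dif_neg h, List.countP_append]
    have hcl := countP_level gs.flatten
    have hle := leaves_level gs.flatten
    have hnn := numNodesList_children_flatten gs.flatten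
    have hlen : (List.map children gs.flatten).length = gs.flatten.length :=
      List.length_map _
    omega

end PTree

namespace PTree

lemma inter_len : ∀ (L : List (List TDSym)), L ≠ [] →
    ((List.intercalate [TDSym.tunnel] L).flatMap tdBits).length + 1
      = (L.map (fun g => (g.flatMap tdBits).length)).sum + L.length
  | [], h => absurd rfl h
  | [g], _ => by simp [List.intercalate]
  | g :: g' :: L, _ => by
    have ih := inter_len (g' :: L) (by simp)
    simp only [List.intercalate, List.intersperse_cons_cons, List.flatten_cons,
      List.flatMap_append, List.length_append, List.map_cons, List.sum_cons,
      List.length_cons] at *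
    simp [tdBits] at *
    omega

lemma filtered_sum (L : List (List PTree)) :
    ((L.filter (fun g => ¬ g.isEmpty)).map gbl).sum = sb L := by
  induction L with
  | nil => simp [sb]
  | cons g L ih =>
    rw [List.filter_cons]
    by_cases h : g.isEmpty
    · have hg : g = [] := List.isEmpty_iff.mp h
      subst hg
      simp [sb, gbl, groupSyms]
      simpa [sb] using ih
    · have h' : g.isEmpty = false := by simpa using h
      simp [h', sb]
      simpa [sb] using ih

lemma filtered_len (L : List (List PTree)) :
    (L.filter (fun g => ¬ g.isEmpty)).length = L.countP (fun g => ¬ g.isEmpty) := by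
  rw [List.countP_eq_length_filter]

lemma TD_length (T : PTree) (h : T.children ≠ []) :
    (TD T).length + 2 * numLeaves T + 3 = 3 * numNodes T := by
  obtain ⟨cs, rfl⟩ : ∃ cs, T = node cs := by cases T; exact ⟨_, rfl⟩
  have hcs : cs ≠ [] := h
  -- unfold bfsGroups once
  have hbfs : bfsGroups [cs]
      = [cs] ++ bfsGroups (List.map children ([cs] : List (List PTree)).flatten) := by
    rw [bfsGroups, dif_neg (by simp [List.isEmpty_iff, hcs])]
  have hFne : ((bfsGroups [cs]).filter (fun g => ¬ g.isEmpty)) ≠ [] := by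
    rw [hbfs]
    simp [List.filter_append, List.filter_cons, List.isEmpty_iff, hcs]
  have hFne' : ((bfsGroups [cs]).filter (fun g => ¬ g.isEmpty)).map groupSyms ≠ [] := by
    simpa using hFne
  have hI := inter_len _ hFne'
  have hTD : (TD (node cs)).length
      = ((List.intercalate [TDSym.tunnel]
          (((bfsGroups [cs]).filter (fun g => ¬ g.isEmpty)).map groupSyms)).flatMap tdBits).length := by
    rfl
  rw [hTD]
  have hmap : ((((bfsGroups [cs]).filter (fun g => ¬ g.isEmpty)).map groupSyms).map
        (fun g => (g.flatMap tdBits).length)).sum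
      = (((bfsGroups [cs]).filter (fun g => ¬ g.isEmpty)).map gbl).sum := by
    rw [List.map_map]; rfl
  rw [hmap, filtered_sum] at hI
  have hlen : (((bfsGroups [cs]).filter (fun g => ¬ g.isEmpty)).map groupSyms).length
      = (bfsGroups [cs]).countP (fun g => ¬ g.isEmpty) := by
    rw [List.length_map, filtered_len]
  rw [hlen] at hI
  have hA := sb_bfs [cs]
  have hB := countP_bfs [cs]
  simp only [List.flatten_cons, List.flatten_nil, List.append_nil] at hA hB
  have hE : ([cs] : List (List PTree)).countP (fun g => ¬ g.isEmpty) = 1 := by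
    simp [List.countP_cons, List.isEmpty_iff, hcs]
  rw [hE] at hB
  have hn : numNodes (node cs) = 1 + numNodesList cs := rfl
  have hl : numLeaves (node cs) = numLeavesList cs := numLeaves_node cs hcs
  omega

end PTree


open PTree in
/-- **Comparison with the adjacency list.** For every rooted plane tree `T`
with `n ≥ 4` nodes, the TreeExplorer representation of the corresponding
labeled tree, which uses `|TE(T)| + n⌈log₂ n⌉` bits, is strictly shorter than
the adjacency-list representation, which uses `2n⌈log₂ n⌉` bits. -/
theorem treeExplorer_beats_adjacency_list (T : PTree) (hn : 4 ≤ numNodes T) :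
    (TE T).length + numNodes T * Nat.clog 2 (numNodes T)
      < 2 * numNodes T * Nat.clog 2 (numNodes T) := by
  set n := numNodes T with hn'
  have hc : 2 ≤ Nat.clog 2 n := by
    have h1 : ¬ (Nat.clog 2 n ≤ 1) := by
      rw [Nat.clog_le_iff_le_pow (by norm_num)]
      omega
    omega
  have hchild : T.children ≠ [] := by
    intro h
    obtain ⟨cs, rfl⟩ : ∃ cs, T = node cs := by cases T; exact ⟨_, rfl⟩
    have : cs = [] := h
    subst this
    simp [numNodes, numNodesList] at hn'
    omega
  have hTE : (TE T).length + 2 ≤ 2 * n := by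
    rw [TE]
    split
    · next hlt =>
      have := PC_length T
      simp only [List.length_cons]
      omega
    · next hge =>
      have := TD_length T hchild
      simp only [List.length_cons]
      omega
  have h1 : n * 2 ≤ n * Nat.clog 2 n := Nat.mul_le_mul_left n hc
  have h2 : 2 * n * Nat.clog 2 n = n * Nat.clog 2 n + n * Nat.clog 2 n := by ring
  omega
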